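/- Let p be prime and m ∈ ℕ. The additive group of polyfunctions over ℤ/p^mℤ is isomorphic to the direct sum over k = 0, 1, ..., s(p^m)/p − 1 of p copies of ℤ/p^{m−e_p(pk)}ℤ, where e_p(j) is the exponent of p in j! and s is the Smarandache function. -/

import Mathlib

/-- The Smarandache function: the least `k` with `n ∣ k!`. -/
noncomputable def smarandache (n : ℕ) : ℕ := sInf {k : ℕ | n ∣ Nat.factorial k}

/-- The ring of polyfunctions over a commutative ring `R`. -/
noncomputable def polyfunRing (R : Type) [CommRing R] : Subring (R → R) :=
  (Pi.ringHom (fun x : R => Polynomial.evalRingHom x)).range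

/-- `e_p(k)`: the exponent of `p` in `k!`. -/
def ep (p k : ℕ) : ℕ := (Nat.factorial k).factorization p

namespace AGP

open Polynomial Finset

/-- The falling-factorial polynomial `X(X-1)⋯(X-k+1)` over `ZMod n`. -/
noncomputable def D (n k : ℕ) : Polynomial (ZMod n) :=
  ∏ i ∈ Finset.range k, (X - C (i : ZMod n))

/-- The corresponding polynomial function. -/
noncomputable def B (n k : ℕ) : ZMod n → ZMod n := fun x => (D n k).eval x

lemma B_apply (n k : ℕ) (x : ZMod n) :
    B n k x = ∏ i ∈ Finset.range k, (x - (i : ZMod n)) := by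
  simp [B, D, eval_prod]

lemma D_monic (n k : ℕ) [NeZero n] : (D n k).Monic :=
  monic_prod_of_monic _ _ fun i _ => monic_X_sub_C _

lemma D_natDegree (n k : ℕ) (hn : 1 < n) : (D n k).natDegree = k := by
  haveI : Fact (1 < n) := ⟨hn⟩
  rw [D, natDegree_prod_of_monic _ _ fun i _ => monic_X_sub_C _]
  simp only [natDegree_X_sub_C]
  simp

lemma B_natCast (n k N : ℕ) (h : k ≤ N) :
    B n k (N : ZMod n) = ((N.descFactorial k : ℕ) : ZMod n) := by
  rw [B_apply, Nat.descFactorial_eq_prod_range, Nat.cast_prod]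
  refine Finset.prod_congr rfl fun i hi => ?_
  rw [Finset.mem_range] at hi
  rw [Nat.cast_sub (le_trans hi.le h)]

lemma exists_rep (n k : ℕ) [NeZero n] (x : ZMod n) :
    ∃ N : ℕ, k ≤ N ∧ (N : ZMod n) = x := by
  refine ⟨x.val + k * n, ?_, ?_⟩
  · have : 1 ≤ n := Nat.one_le_iff_ne_zero.2 (NeZero.ne n)
    calc k = k * 1 := (mul_one k).symm
    _ ≤ k * n := Nat.mul_le_mul_left k this
    _ ≤ x.val + k * n := Nat.le_add_left _ _
  · push_cast [ZMod.natCast_self]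
    simp [ZMod.natCast_rightInverse x]

lemma B_mul_eq_zero (n c k : ℕ) [NeZero n] (hd : n ∣ c * k.factorial) (x : ZMod n) :
    (c : ZMod n) * B n k x = 0 := by
  obtain ⟨N, hkN, rfl⟩ := exists_rep n k x
  rw [B_natCast n k N hkN, ← Nat.cast_mul, ZMod.natCast_eq_zero_iff]
  exact hd.trans (mul_dvd_mul_left c (Nat.factorial_dvd_descFactorial N k))

end AGP

namespace AGP
open Polynomial Finset

/-- `t ↦ (fun x => t * B n k x)` as an additive hom `ℤ →+ (ZMod (p^m) → ZMod (p^m))`. -/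
noncomputable def Lmap (p m j : ℕ) : ℤ →+ (ZMod (p ^ m) → ZMod (p ^ m)) :=
  AddMonoidHom.mk' (fun t => fun x => (t : ZMod (p ^ m)) * B (p ^ m) j x)
    (by intro s t; funext x; simp only [Pi.add_apply]; push_cast; ring)

lemma Lmap_apply (p m j : ℕ) (t : ℤ) (x : ZMod (p ^ m)) :
    Lmap p m j t x = (t : ZMod (p ^ m)) * B (p ^ m) j x := rfl

lemma Lmap_mem (p m j : ℕ) (t : ℤ) : Lmap p m j t ∈ polyfunRing (ZMod (p ^ m)) := by
  refine ⟨C (t : ZMod (p ^ m)) * D (p ^ m) j, ?_⟩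
  funext x
  simp [Lmap_apply, B]
  rfl

/-- The additive hom `ZMod (p^(m - e_p(j))) →+ (ZMod (p^m) → ZMod (p^m))`,
`v ↦ (x ↦ v * B j x)`. -/
noncomputable def Lhom (p m j : ℕ) [NeZero (p ^ m)]
    (hd : p ^ m ∣ p ^ (m - ep p j) * j.factorial) :
    ZMod (p ^ (m - ep p j)) →+ (ZMod (p ^ m) → ZMod (p ^ m)) :=
  ZMod.lift _ ⟨Lmap p m j, by
    funext x
    have := B_mul_eq_zero (p ^ m) (p ^ (m - ep p j)) j hd x
    simpa [Lmap_apply] using this⟩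

lemma Lhom_intCast (p m j : ℕ) [NeZero (p ^ m)]
    (hd : p ^ m ∣ p ^ (m - ep p j) * j.factorial) (t : ℤ) :
    Lhom p m j hd ((t : ZMod (p ^ (m - ep p j)))) = Lmap p m j t :=
  ZMod.lift_coe _ _ _

lemma Lhom_apply (p m j : ℕ) [NeZero (p ^ m)] [NeZero (p ^ (m - ep p j))]
    (hd : p ^ m ∣ p ^ (m - ep p j) * j.factorial) (v : ZMod (p ^ (m - ep p j))) :
    Lhom p m j hd v = Lmap p m j (v.val : ℤ) := by
  have hv : ((((v.val : ℕ) : ℤ)) : ZMod (p ^ (m - ep p j))) = v := by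
    rw [Int.cast_natCast]; exact ZMod.natCast_rightInverse v
  conv_lhs => rw [← hv]
  rw [Lhom_intCast]

end AGP

namespace AGP
open Polynomial Finset

lemma smarandache_nonempty (p m : ℕ) (hp : p.Prime) :
    {k : ℕ | p ^ m ∣ Nat.factorial k}.Nonempty :=
  ⟨p ^ m, Nat.dvd_factorial (pow_pos hp.pos m) le_rfl⟩

lemma smarandache_spec (p m : ℕ) (hp : p.Prime) :
    p ^ m ∣ Nat.factorial (smarandache (p ^ m)) :=
  Nat.sInf_mem (smarandache_nonempty p m hp)

lemma not_dvd_of_lt (p m j : ℕ) (hj : j < smarandache (p ^ m)) :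
    ¬ p ^ m ∣ Nat.factorial j :=
  Nat.notMem_of_lt_sInf hj

lemma ep_lt_of_lt (p m j : ℕ) (hp : p.Prime) (hj : j < smarandache (p ^ m)) :
    ep p j < m := by
  have h := not_dvd_of_lt p m j hj
  by_contra hcon
  push_neg at hcon
  exact h ((hp.pow_dvd_iff_le_factorization (Nat.factorial_ne_zero j)).2 hcon)

lemma hd_of_lt (p m j : ℕ) (hp : p.Prime) (hj : j < smarandache (p ^ m)) :
    p ^ m ∣ p ^ (m - ep p j) * Nat.factorial j := by
  have he : ep p j ≤ m := (ep_lt_of_lt p m j hp hj).le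
  have h1 : p ^ ep p j ∣ Nat.factorial j :=
    (hp.pow_dvd_iff_le_factorization (Nat.factorial_ne_zero j)).2 le_rfl
  calc p ^ m = p ^ (m - ep p j) * p ^ ep p j := by
        rw [← pow_add, Nat.sub_add_cancel he]
  _ ∣ p ^ (m - ep p j) * Nat.factorial j := mul_dvd_mul_left _ h1

lemma p_dvd_smarandache (p m : ℕ) (hp : p.Prime) (hm : 0 < m) :
    p ∣ smarandache (p ^ m) := by
  have hSmem : p ^ m ∣ Nat.factorial (smarandache (p ^ m)) := smarandache_spec p m hp
  cases hS : smarandache (p ^ m) with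
  | zero =>
    rw [hS, Nat.factorial_zero, Nat.dvd_one] at hSmem
    exact absurd hSmem (Nat.one_lt_pow hm.ne' hp.one_lt).ne'
  | succ S' =>
    by_contra hnd
    rw [hS, Nat.factorial_succ] at hSmem
    have hcop : Nat.Coprime (p ^ m) (S' + 1) :=
      Nat.Coprime.pow_left m (hp.coprime_iff_not_dvd.2 hnd)
    have hmem : p ^ m ∣ Nat.factorial S' := hcop.dvd_of_dvd_mul_left hSmem
    have hlt : S' < smarandache (p ^ m) := by rw [hS]; exact Nat.lt_succ_self S'
    exact Nat.notMem_of_lt_sInf hlt hmem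

lemma ep_block (p k i : ℕ) (hp : p.Prime) (hi : i < p) :
    ep p (p * k + i) = ep p (p * k) := by
  induction i with
  | zero => rfl
  | succ i IH =>
    have hi' : i < p := Nat.lt_of_succ_lt hi
    have hnd : ¬ p ∣ (p * k + i + 1) := by
      intro h
      have : p ∣ i + 1 := by
        have := (Nat.dvd_add_right (Dvd.intro k rfl)).1 (by rwa [add_assoc] at h)
        exact this
      have := Nat.le_of_dvd (Nat.succ_pos i) this
      omega
    have : ep p (p * k + (i + 1)) = ep p (p * k + i) := by
      show (Nat.factorial (p * k + i + 1)).factorization p = _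
      rw [show p * k + i + 1 = (p * k + i) + 1 from rfl, Nat.factorial_succ,
        Nat.factorization_mul (Nat.succ_ne_zero _) (Nat.factorial_ne_zero _)]
      simp [Nat.factorization_eq_zero_of_not_dvd hnd, ep]
    rw [this, IH hi']

end AGP

namespace AGP
open Polynomial Finset

noncomputable def Phi (p m : ℕ) [NeZero (p ^ m)] (hp : p.Prime) :
    (∀ j : Fin (smarandache (p ^ m)), ZMod (p ^ (m - ep p j.val))) →+
      (ZMod (p ^ m) → ZMod (p ^ m)) :=
  AddMonoidHom.mk' (fun a => ∑ j : Fin (smarandache (p ^ m)),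
      Lhom p m j.val (hd_of_lt p m j.val hp j.isLt) (a j))
    (by
      intro a b
      rw [← Finset.sum_add_distrib]
      exact Finset.sum_congr rfl fun j _ => by rw [Pi.add_apply, map_add])

lemma Phi_apply (p m : ℕ) [NeZero (p ^ m)] (hp : p.Prime)
    (a : ∀ j : Fin (smarandache (p ^ m)), ZMod (p ^ (m - ep p j.val))) :
    Phi p m hp a = ∑ j : Fin (smarandache (p ^ m)),
      Lhom p m j.val (hd_of_lt p m j.val hp j.isLt) (a j) := rfl

lemma Phi_single (p m : ℕ) [NeZero (p ^ m)] (hp : p.Prime)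
    (j : Fin (smarandache (p ^ m))) (v : ZMod (p ^ (m - ep p j.val))) :
    Phi p m hp (Pi.single j v) = Lhom p m j.val (hd_of_lt p m j.val hp j.isLt) v := by
  rw [Phi_apply, Finset.sum_eq_single j]
  · rw [Pi.single_eq_same]
  · intro i _ hij
    rw [Pi.single_eq_of_ne hij, map_zero]
  · intro h
    exact absurd (Finset.mem_univ j) h

lemma Phi_mem (p m : ℕ) [NeZero (p ^ m)] (hp : p.Prime)
    (a : ∀ j : Fin (smarandache (p ^ m)), ZMod (p ^ (m - ep p j.val))) :
    Phi p m hp a ∈ polyfunRing (ZMod (p ^ m)) := by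
  rw [Phi_apply]
  refine sum_mem fun j _ => ?_
  obtain ⟨t, ht⟩ := ZMod.intCast_surjective (a j)
  rw [← ht, Lhom_intCast]
  exact Lmap_mem p m j.val t

lemma Phi_inj (p m : ℕ) (hp : p.Prime) (hm : 0 < m) [NeZero (p ^ m)]
    (a : ∀ j : Fin (smarandache (p ^ m)), ZMod (p ^ (m - ep p j.val)))
    (ha : Phi p m hp a = 0) : a = 0 := by
  have hkey : ∀ jv : ℕ, ∀ hj : jv < smarandache (p ^ m), a ⟨jv, hj⟩ = 0 := by
    intro jv
    induction jv using Nat.strong_induction_on with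
    | _ jv IH =>
      intro hj
      haveI : NeZero (p ^ (m - ep p jv)) := NeZero.of_pos (pow_pos hp.pos _)
      have h0 := congrFun ha ((jv : ℕ) : ZMod (p ^ m))
      rw [Phi_apply, Finset.sum_apply, Pi.zero_apply] at h0
      have hside1 : ∀ b : Fin (smarandache (p ^ m)), b ∈ Finset.univ →
          b ≠ ⟨jv, hj⟩ →
          Lhom p m b.val (hd_of_lt p m b.val hp b.isLt) (a b) ((jv : ℕ) : ZMod (p ^ m)) = 0 := by
        intro b _ hb
        haveI : NeZero (p ^ (m - ep p b.val)) := NeZero.of_pos (pow_pos hp.pos _)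
        have hbv : b.val ≠ jv := fun h => hb (Fin.ext h)
        rcases lt_or_gt_of_ne hbv with hlt | hgt
        · rw [IH b.val hlt b.isLt, map_zero]
          rfl
        · rw [Lhom_apply, Lmap_apply, B_apply]
          refine mul_eq_zero_of_right _ ?_
          exact Finset.prod_eq_zero (Finset.mem_range.2 hgt) (sub_self _)
      have hside2 : (⟨jv, hj⟩ : Fin (smarandache (p ^ m))) ∉ Finset.univ →
          Lhom p m jv (hd_of_lt p m jv hp hj) (a ⟨jv, hj⟩) ((jv : ℕ) : ZMod (p ^ m)) = 0 :=
        fun h => absurd (Finset.mem_univ _) h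
      have hdiag : Lhom p m jv (hd_of_lt p m jv hp hj) (a ⟨jv, hj⟩) ((jv : ℕ) : ZMod (p ^ m)) = 0 := by
        rw [← h0]
        exact (Finset.sum_eq_single _ hside1 hside2).symm
      rw [Lhom_apply, Lmap_apply, B_natCast _ _ _ le_rfl, Nat.descFactorial_self,
        Int.cast_natCast, ← Nat.cast_mul] at hdiag
      have hdvd : p ^ m ∣ (a ⟨jv, hj⟩).val * Nat.factorial jv :=
        (ZMod.natCast_eq_zero_iff _ _).1 hdiag
      have he : ep p jv < m := ep_lt_of_lt p m jv hp hj
      have hfac : Nat.factorial jv = p ^ ep p jv * (Nat.factorial jv / p ^ ep p jv) :=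
        (Nat.ordProj_mul_ordCompl_eq_self (Nat.factorial jv) p).symm
      have hu : ¬ p ∣ Nat.factorial jv / p ^ ep p jv :=
        Nat.not_dvd_ordCompl hp (Nat.factorial_ne_zero jv)
      have h2 : p ^ (m - ep p jv) * p ^ ep p jv ∣
          ((a ⟨jv, hj⟩).val * (Nat.factorial jv / p ^ ep p jv)) * p ^ ep p jv := by
        rw [← pow_add, Nat.sub_add_cancel he.le]
        calc p ^ m ∣ (a ⟨jv, hj⟩).val * Nat.factorial jv := hdvd
        _ = (a ⟨jv, hj⟩).val * (Nat.factorial jv / p ^ ep p jv) * p ^ ep p jv := by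
            rw [mul_assoc, mul_comm (Nat.factorial jv / p ^ ep p jv), ← hfac]
      have h3 : p ^ (m - ep p jv) ∣ (a ⟨jv, hj⟩).val * (Nat.factorial jv / p ^ ep p jv) :=
        (Nat.mul_dvd_mul_iff_right (pow_pos hp.pos _)).1 h2
      have h4 : p ^ (m - ep p jv) ∣ (a ⟨jv, hj⟩).val :=
        (Nat.Coprime.pow_left _ (hp.coprime_iff_not_dvd.2 hu)).dvd_of_dvd_mul_right h3
      have h5 : (((a ⟨jv, hj⟩).val : ℕ) : ZMod (p ^ (m - ep p jv))) = 0 :=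
        (ZMod.natCast_eq_zero_iff _ _).2 h4
      rw [ZMod.natCast_rightInverse _] at h5
      exact h5
  funext j
  rw [Pi.zero_apply, ← hkey j.val j.isLt]

lemma Phi_range (p m : ℕ) (hp : p.Prime) (hm : 0 < m) [NeZero (p ^ m)]
    (q : Polynomial (ZMod (p ^ m))) :
    (fun x => q.eval x) ∈ (Phi p m hp).range := by
  have hn1 : 1 < p ^ m := Nat.one_lt_pow hm.ne' hp.one_lt
  have claim1 : ∀ (k : ℕ) (c : ZMod (p ^ m)),
      (fun x => c * B (p ^ m) k x) ∈ (Phi p m hp).range := by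
    intro k c
    by_cases hk : k < smarandache (p ^ m)
    · refine ⟨Pi.single (⟨k, hk⟩ : Fin _) (((c.val : ℤ) : ZMod (p ^ (m - ep p k)))), ?_⟩
      rw [Phi_single, Lhom_intCast]
      funext x
      rw [Lmap_apply, Int.cast_natCast, ZMod.natCast_rightInverse c]
    · push_neg at hk
      have hB : ∀ x, c * B (p ^ m) k x = 0 := by
        intro x
        have h1 : ((1 : ℕ) : ZMod (p ^ m)) * B (p ^ m) k x = 0 := by
          refine B_mul_eq_zero (p ^ m) 1 k ?_ x
          rw [one_mul]
          exact (smarandache_spec p m hp).trans (Nat.factorial_dvd_factorial hk)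
        rw [Nat.cast_one, one_mul] at h1
        rw [h1, mul_zero]
      refine ⟨0, ?_⟩
      rw [map_zero]
      funext x
      rw [hB x]
      rfl
  suffices H : ∀ d : ℕ, ∀ q : Polynomial (ZMod (p ^ m)), q.natDegree ≤ d →
      (fun x => q.eval x) ∈ (Phi p m hp).range from H q.natDegree q le_rfl
  intro d
  induction d with
  | zero =>
    intro q hq
    obtain ⟨a, rfl⟩ : ∃ a, q = C a := ⟨q.coeff 0, Polynomial.eq_C_of_natDegree_le_zero hq⟩
    have hfun : (fun x => (C a).eval x) = fun x => a * B (p ^ m) 0 x := by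
      funext x
      simp [B_apply]
    rw [hfun]
    exact claim1 0 a
  | succ d IH =>
    intro q hq
    set c := q.coeff (d + 1) with hc
    have hmon : (D (p ^ m) (d + 1)).Monic := D_monic _ _
    have hdeg : (D (p ^ m) (d + 1)).natDegree = d + 1 := D_natDegree _ _ hn1
    have h2 : (q - C c * D (p ^ m) (d + 1)).natDegree ≤ d := by
      rw [Polynomial.natDegree_le_iff_coeff_eq_zero]
      intro N hN
      rw [Polynomial.coeff_sub, Polynomial.coeff_C_mul]
      rcases eq_or_lt_of_le (Nat.succ_le_of_lt hN) with h | h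
      · rw [← h]
        have hone : (D (p ^ m) (d + 1)).coeff (d + 1) = 1 := by
          have := hmon.coeff_natDegree
          rwa [hdeg] at this
        rw [hone, mul_one, hc, sub_self]
      · have hz1 : q.coeff N = 0 :=
          Polynomial.coeff_eq_zero_of_natDegree_lt (lt_of_le_of_lt hq h)
        have hz2 : (D (p ^ m) (d + 1)).coeff N = 0 :=
          Polynomial.coeff_eq_zero_of_natDegree_lt (by rw [hdeg]; exact h)
        rw [hz1, hz2, mul_zero, sub_zero]
    have hsplit : (fun x => q.eval x) =
        (fun x => (q - C c * D (p ^ m) (d + 1)).eval x) +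
          fun x => c * B (p ^ m) (d + 1) x := by
      funext x
      simp only [Pi.add_apply, Polynomial.eval_sub, Polynomial.eval_mul, Polynomial.eval_C, B]
      ring
    rw [hsplit]
    exact add_mem (IH _ h2) (claim1 (d + 1) c)

end AGP

namespace AGP

noncomputable def PhiRes (p m : ℕ) (hp : p.Prime) [NeZero (p ^ m)] :
    (∀ j : Fin (smarandache (p ^ m)), ZMod (p ^ (m - ep p j.val))) →+
      (polyfunRing (ZMod (p ^ m))) :=
  AddMonoidHom.codRestrict (Phi p m hp) (polyfunRing (ZMod (p ^ m))) (Phi_mem p m hp)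

noncomputable def mainIso (p m : ℕ) (hp : p.Prime) (hm : 0 < m) [NeZero (p ^ m)] :
    (polyfunRing (ZMod (p ^ m))) ≃+
      ∀ j : Fin (smarandache (p ^ m)), ZMod (p ^ (m - ep p j.val)) := by
  refine (AddEquiv.ofBijective (PhiRes p m hp) ⟨?_, ?_⟩).symm
  · refine (injective_iff_map_eq_zero _).2 fun a ha => ?_
    refine Phi_inj p m hp hm a ?_
    have := congrArg (Subtype.val) ha
    simpa [PhiRes] using this
  · rintro ⟨f, hf⟩
    obtain ⟨q, hq⟩ := hf
    obtain ⟨a, haq⟩ := Phi_range p m hp hm q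
    refine ⟨a, Subtype.ext ?_⟩
    have hcoe : ((PhiRes p m hp a : (ZMod (p ^ m) → ZMod (p ^ m)))) = Phi p m hp a := rfl
    rw [hcoe, haq]
    show _ = f
    rw [← hq]
    rfl

/-- Currying equivalence. -/
def curryEquiv {a b : ℕ} (Z : Fin a → Type) [∀ k, Add (Z k)] :
    (∀ x : Fin a × Fin b, Z x.1) ≃+ ∀ k : Fin a, Fin b → Z k where
  toFun f k i := f (k, i)
  invFun g x := g x.1 x.2
  left_inv f := rfl
  right_inv g := rfl
  map_add' f g := rfl

end AGP

theorem additive_group_of_polyfunctions' (p : ℕ) (hp : p.Prime) (m : ℕ)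
    (hm : 0 < m) :
    Nonempty ((polyfunRing (ZMod (p ^ m))) ≃+
      ∀ k : Fin (smarandache (p ^ m) / p),
        Fin p → ZMod (p ^ (m - ep p (p * (k : ℕ))))) := by
  haveI : NeZero (p ^ m) := NeZero.of_pos (pow_pos hp.pos m)
  have hmul : smarandache (p ^ m) / p * p = smarandache (p ^ m) :=
    Nat.div_mul_cancel (AGP.p_dvd_smarandache p m hp hm)
  let σ : Fin (smarandache (p ^ m) / p) × Fin p ≃ Fin (smarandache (p ^ m)) :=
    finProdFinEquiv.trans (finCongr hmul)
  have hσ : ∀ x : Fin (smarandache (p ^ m) / p) × Fin p,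
      ((σ x) : ℕ) = x.2.val + p * x.1.val := fun x => rfl
  have hep : ∀ x : Fin (smarandache (p ^ m) / p) × Fin p,
      ep p ((σ x) : ℕ) = ep p (p * x.1.val) := by
    intro x
    rw [hσ x, add_comm]
    exact AGP.ep_block p x.1.val x.2.val hp x.2.isLt
  let R1 := RingEquiv.piCongrLeft
    (fun j : Fin (smarandache (p ^ m)) => ZMod (p ^ (m - ep p j.val))) σ
  let R2 := RingEquiv.piCongrRight
    (fun x : Fin (smarandache (p ^ m) / p) × Fin p =>
      ZMod.ringEquivCongr (congrArg (fun t => p ^ (m - t)) (hep x)))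
  let E3 := AGP.curryEquiv (b := p)
    (fun k : Fin (smarandache (p ^ m) / p) => ZMod (p ^ (m - ep p (p * k.val))))
  exact ⟨(AGP.mainIso p m hp hm).trans
    ((R1.symm.toAddEquiv).trans (R2.toAddEquiv.trans E3))⟩

/-- The additive group of polyfunctions over `ℤ/p^mℤ` is isomorphic to
`⨁_{k=0}^{s(p^m)/p - 1} p ⬝ ℤ/p^{m - e_p(pk)}ℤ`. -/
theorem additive_group_of_polyfunctions (p : ℕ) (hp : p.Prime) (m : ℕ)
    (hm : 0 < m) :
    Nonempty ((polyfunRing (ZMod (p ^ m))) ≃+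
      ∀ k : Fin (smarandache (p ^ m) / p),
        Fin p → ZMod (p ^ (m - ep p (p * (k : ℕ))))) := by
  exact additive_group_of_polyfunctions' p hp m hm
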